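/- arXiv:2207.07916 — 2 statements merged into one kernel-verified Lean document; each statement's English description precedes it below -/
import Mathlib

section
/- For a discrete random variable X with finite support and any m ≥ 1, there exists a random variable X' with support of size at most m minimizing the Kolmogorov distance d_K(X,X') among all random variables with support size at most m; moreover this minimum distance is achieved by some X' whose support is contained in the support of X. -/
open scoped Classical

/-- A finitely supported discrete random variable on ℝ, given by its
probability mass function. -/
structure DRV where
  f : ℝ →₀ ℝ
  nonneg : ∀ x, 0 ≤ f x
  sum_one : f.sum (fun _ p => p) = 1

/-- The cumulative distribution function `F_X(t) = Pr(X ≤ t)`. -/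
noncomputable def DRV.cdf (X : DRV) (t : ℝ) : ℝ :=
  ∑ x ∈ X.f.support.filter (· ≤ t), X.f x

/-- The Kolmogorov distance `d_K(X,X') = sup_t |F_X(t) - F_{X'}(t)|`. -/
noncomputable def dK (X Y : DRV) : ℝ := ⨆ t : ℝ, |X.cdf t - Y.cdf t|

/-- The size of the support of a random variable. -/
def DRV.suppSize (X : DRV) : ℕ := X.f.support.card


lemma cdf_eq_sum_subset (W : DRV) {T : Finset ℝ} (hT : W.f.support ⊆ T) (t : ℝ) :
    W.cdf t = ∑ x ∈ T.filter (· ≤ t), W.f x := by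
  refine Finset.sum_subset (Finset.filter_subset_filter _ hT) ?_
  intro x hx hnx
  by_contra h
  exact hnx (Finset.mem_filter.2 ⟨Finsupp.mem_support_iff.2 h, (Finset.mem_filter.1 hx).2⟩)

lemma cdf_nonneg (W : DRV) (t : ℝ) : 0 ≤ W.cdf t :=
  Finset.sum_nonneg fun x _ => W.nonneg x

lemma cdf_le_one (W : DRV) (t : ℝ) : W.cdf t ≤ 1 := by
  have h : W.cdf t ≤ ∑ x ∈ W.f.support, W.f x :=
    Finset.sum_le_sum_of_subset_of_nonneg (Finset.filter_subset _ _) fun x _ _ => W.nonneg x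
  have h2 : ∑ x ∈ W.f.support, W.f x = 1 := W.sum_one
  linarith

lemma bddK (X Y : DRV) : BddAbove (Set.range fun t => |X.cdf t - Y.cdf t|) := by
  refine ⟨1, ?_⟩
  rintro _ ⟨t, rfl⟩
  have := cdf_nonneg X t; have := cdf_nonneg Y t
  have := cdf_le_one X t; have := cdf_le_one Y t
  rw [abs_sub_le_iff]; constructor <;> linarith

lemma le_dK (X Y : DRV) (t : ℝ) : |X.cdf t - Y.cdf t| ≤ dK X Y :=
  le_ciSup (bddK X Y) t

lemma dK_nonneg (X Y : DRV) : 0 ≤ dK X Y :=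
  le_trans (abs_nonneg _) (le_dK X Y 0)

lemma dK_le (X Y : DRV) {c : ℝ} (h : ∀ t, |X.cdf t - Y.cdf t| ≤ c) : dK X Y ≤ c :=
  ciSup_le h

/-- cdf as a Finsupp.sum -/
lemma cdf_eq_fsum (W : DRV) (t : ℝ) :
    W.cdf t = W.f.sum (fun x p => if x ≤ t then p else 0) := by
  rw [DRV.cdf, Finset.sum_filter]; rfl

/-- Lemma A: reduce sup over ℝ to values at support points. -/
lemma cdf_snap (X Y : DRV) (hY : Y.f.support ⊆ X.f.support) (t : ℝ) :
    (X.cdf t = 0 ∧ Y.cdf t = 0) ∨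
    ∃ x ∈ X.f.support, X.cdf t = X.cdf x ∧ Y.cdf t = Y.cdf x := by
  set S := X.f.support with hs
  by_cases h : (S.filter (· ≤ t)).Nonempty
  · right
    set x₀ := (S.filter (· ≤ t)).max' h with hx₀
    have hx₀m : x₀ ∈ S.filter (· ≤ t) := Finset.max'_mem _ _
    have hx₀S : x₀ ∈ S := (Finset.mem_filter.1 hx₀m).1
    have hx₀t : x₀ ≤ t := (Finset.mem_filter.1 hx₀m).2
    have hfe : S.filter (· ≤ t) = S.filter (· ≤ x₀) := by
      ext y
      simp only [Finset.mem_filter]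
      constructor
      · rintro ⟨hyS, hyt⟩
        exact ⟨hyS, Finset.le_max' _ y (by simp only [Finset.mem_filter]; exact ⟨hyS, hyt⟩)⟩
      · rintro ⟨hyS, hyx⟩
        exact ⟨hyS, le_trans hyx hx₀t⟩
    refine ⟨x₀, hx₀S, ?_, ?_⟩
    · rw [cdf_eq_sum_subset X (le_refl S), cdf_eq_sum_subset X (le_refl S), hfe]
    · rw [cdf_eq_sum_subset Y hY, cdf_eq_sum_subset Y hY, hfe]
  · left
    rw [Finset.not_nonempty_iff_eq_empty] at h
    constructor
    · rw [cdf_eq_sum_subset X (le_refl S), h, Finset.sum_empty]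
    · rw [cdf_eq_sum_subset Y hY, h, Finset.sum_empty]

lemma sum_filter_coe (S : Finset ℝ) (p : ℝ → Prop) [DecidablePred p] (F : ℝ → ℝ) :
    ∑ x ∈ S.filter p, F x = ∑ i ∈ Finset.univ.filter (fun i : ↥S => p ↑i), F ↑i := by
  rw [Finset.sum_filter, Finset.sum_filter, ← Finset.sum_coe_sort]

/-- build a DRV from a point of the simplex on a finset -/
noncomputable def mkDRV (S : Finset ℝ) (g : ↥S → ℝ) (h0 : ∀ i, 0 ≤ g i)
    (h1 : ∑ i, g i = 1) : DRV where
  f := Finsupp.onFinset S (fun x => if h : x ∈ S then g ⟨x, h⟩ else 0) (by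
    intro x hx
    by_contra h
    exact hx (by simp [h]))
  nonneg := by
    intro x
    simp only [Finsupp.onFinset_apply]
    split
    · exact h0 _
    · exact le_refl 0
  sum_one := by
    rw [Finsupp.sum]
    rw [Finset.sum_subset (Finsupp.support_onFinset_subset (hf := by intro a ha; by_contra h; exact ha (by simp [h])))]
    · rw [← h1, ← Finset.sum_coe_sort]
      refine Finset.sum_congr rfl fun x _ => ?_
      simp only [Finsupp.onFinset_apply]
      rw [dif_pos x.2]
    · intro x hx hnx
      exact Finsupp.notMem_support_iff.1 hnx

lemma mkDRV_supp (S : Finset ℝ) (g : ↥S → ℝ) (h0 : ∀ i, 0 ≤ g i) (h1 : ∑ i, g i = 1) :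
    (mkDRV S g h0 h1).f.support ⊆ S := by
  intro x hx
  have hne := Finsupp.mem_support_iff.1 hx
  by_contra h
  exact hne (by simp [mkDRV, h])

lemma mkDRV_apply (S : Finset ℝ) (g : ↥S → ℝ) (h0 : ∀ i, 0 ≤ g i) (h1 : ∑ i, g i = 1)
    (i : ↥S) : (mkDRV S g h0 h1).f ↑i = g i := by
  simp only [mkDRV, Finsupp.onFinset_apply]
  rw [dif_pos i.2]

lemma mkDRV_suppSize (S : Finset ℝ) (g : ↥S → ℝ) (h0 : ∀ i, 0 ≤ g i) (h1 : ∑ i, g i = 1) :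
    (mkDRV S g h0 h1).suppSize ≤ (Finset.univ.filter fun i : ↥S => g i ≠ 0).card := by
  rw [DRV.suppSize]
  have hsub : (mkDRV S g h0 h1).f.support ⊆
      Finset.image (fun i : ↥S => (i : ℝ)) (Finset.univ.filter fun i : ↥S => g i ≠ 0) := by
    intro x hx
    have hxS : x ∈ S := mkDRV_supp S g h0 h1 hx
    have hne := Finsupp.mem_support_iff.1 hx
    refine Finset.mem_image.2 ⟨⟨x, hxS⟩, ?_, rfl⟩
    refine Finset.mem_filter.2 ⟨Finset.mem_univ _, ?_⟩
    intro h
    exact hne (by rw [← mkDRV_apply S g h0 h1 ⟨x, hxS⟩] at h; exact h)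
  exact le_trans (Finset.card_le_card hsub) (Finset.card_image_le)

lemma cdf_coe (W : DRV) {S : Finset ℝ} (hW : W.f.support ⊆ S) (t : ℝ) :
    W.cdf t = ∑ j ∈ Finset.univ.filter (fun j : ↥S => (j : ℝ) ≤ t), W.f ↑j := by
  rw [cdf_eq_sum_subset W hW, sum_filter_coe]

/-- snapping map: send y to the least element of S that is ≥ y, or max S. -/
noncomputable def snap (S : Finset ℝ) (hS : S.Nonempty) (y : ℝ) : ℝ :=
  if h : (S.filter (fun x => y ≤ x)).Nonempty then (S.filter (fun x => y ≤ x)).min' h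
  else S.max' hS

lemma snap_mem (S : Finset ℝ) (hS : S.Nonempty) (y : ℝ) : snap S hS y ∈ S := by
  rw [snap]
  split
  · exact (Finset.mem_filter.1 (Finset.min'_mem _ _)).1
  · exact Finset.max'_mem _ _

lemma snap_le_iff (S : Finset ℝ) (hS : S.Nonempty) (y : ℝ) {x : ℝ} (hx : x ∈ S)
    (hxmax : x ≠ S.max' hS) : snap S hS y ≤ x ↔ y ≤ x := by
  constructor
  · intro h
    rw [snap] at h
    split at h
    · rename_i hne
      have : y ≤ (S.filter (fun x => y ≤ x)).min' hne :=
        (Finset.mem_filter.1 (Finset.min'_mem _ _)).2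
      linarith
    · exact absurd (le_antisymm (Finset.le_max' S x hx) h) hxmax
  · intro h
    rw [snap, dif_pos ⟨x, Finset.mem_filter.2 ⟨hx, h⟩⟩]
    exact Finset.min'_le _ x (Finset.mem_filter.2 ⟨hx, h⟩)

lemma snap_le_max (S : Finset ℝ) (hS : S.Nonempty) (y : ℝ) :
    snap S hS y ≤ S.max' hS := Finset.le_max' S _ (snap_mem S hS y)

/-- pushforward of a DRV along a map -/
noncomputable def pushDRV (Y : DRV) (r : ℝ → ℝ) : DRV where
  f := Y.f.mapDomain r
  nonneg := by
    intro x
    classical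
    rw [Finsupp.mapDomain, Finsupp.sum_apply]
    refine Finset.sum_nonneg fun y _ => ?_
    simp only [Finsupp.single_apply]
    split
    · exact Y.nonneg y
    · exact le_refl 0
  sum_one := by
    rw [Finsupp.sum_mapDomain_index (fun _ => rfl) (fun _ _ _ => rfl)]
    exact Y.sum_one

lemma pushDRV_supp (Y : DRV) (r : ℝ → ℝ) :
    (pushDRV Y r).f.support ⊆ Y.f.support.image r := Finsupp.mapDomain_support

lemma pushDRV_cdf (Y : DRV) (r : ℝ → ℝ) (t : ℝ) :
    (pushDRV Y r).cdf t = Y.f.sum fun y p => if r y ≤ t then p else 0 := by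
  rw [cdf_eq_fsum, pushDRV]
  exact Finsupp.sum_mapDomain_index (fun b => by simp) (fun b m₁ m₂ => by split <;> simp)

lemma isClosed_sparse {ι : Type*} [Fintype ι] (m : ℕ) :
    IsClosed {g : ι → ℝ | (Finset.univ.filter fun i => g i ≠ 0).card ≤ m} := by
  rw [← isOpen_compl_iff, isOpen_iff_mem_nhds]
  intro g hg
  simp only [Set.mem_compl_iff, Set.mem_setOf_eq, not_le] at hg
  obtain ⟨T, hTsub, hTcard⟩ := Finset.exists_subset_card_eq (Nat.succ_le_of_lt hg)
  have hopen : IsOpen {h : ι → ℝ | ∀ i ∈ T, h i ≠ 0} := by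
    have he : {h : ι → ℝ | ∀ i ∈ T, h i ≠ 0} = ⋂ i ∈ T, {h | h i ≠ 0} := by ext h; simp
    rw [he]
    refine isOpen_biInter_finset fun i _ => ?_
    have he2 : {h : ι → ℝ | h i ≠ 0} = (fun h : ι → ℝ => h i) ⁻¹' ({0}ᶜ) := rfl
    rw [he2]
    exact isOpen_compl_singleton.preimage (continuous_apply i)
  have hmem : g ∈ {h : ι → ℝ | ∀ i ∈ T, h i ≠ 0} := fun i hi => by
    simpa using (Finset.mem_filter.1 (hTsub hi)).2
  refine Filter.mem_of_superset (hopen.mem_nhds hmem) ?_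
  intro h hh
  simp only [Set.mem_compl_iff, Set.mem_setOf_eq, not_le]
  have hsub : T ⊆ Finset.univ.filter fun i => h i ≠ 0 := fun i hi =>
    Finset.mem_filter.2 ⟨Finset.mem_univ i, hh i hi⟩
  calc m < m + 1 := Nat.lt_succ_self m
    _ = T.card := hTcard.symm
    _ ≤ _ := Finset.card_le_card hsub


/-- For a discrete random variable `X` with finite support and any `m ≥ 1`,
there exists a random variable `X'` with support of size at most `m`
minimizing the Kolmogorov distance to `X` among all random variables with
support size at most `m`; moreover the minimizer can be chosen with support
contained in the support of `X`. -/
theorem exists_optimal_m_approximation (X : DRV) (m : ℕ) (hm : 1 ≤ m) :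
    ∃ X' : DRV, X'.suppSize ≤ m ∧
      (∀ Y : DRV, Y.suppSize ≤ m → dK X X' ≤ dK X Y) ∧
      X'.f.support ⊆ X.f.support := by
  set S := X.f.support with hSdef
  have hS : S.Nonempty := Finsupp.support_nonempty_iff.2 (by
    intro h
    have h1 := X.sum_one
    rw [h] at h1
    simp at h1)
  set F : ↥S → ℝ := fun i => X.cdf ↑i with hFdef
  set L : (↥S → ℝ) → (↥S → ℝ) :=
    fun g i => ∑ j ∈ Finset.univ.filter (fun j : ↥S => (j : ℝ) ≤ (i : ℝ)), g j with hLdef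
  set Φ : (↥S → ℝ) → ℝ := fun g => dist F (L g) with hΦdef
  have hLcont : Continuous L :=
    continuous_pi fun i => continuous_finset_sum _ fun j _ => continuous_apply j
  have hΦcont : Continuous Φ := continuous_const.dist hLcont
  set K : Set (↥S → ℝ) :=
    stdSimplex ℝ ↥S ∩ {g | (Finset.univ.filter fun i => g i ≠ 0).card ≤ m} with hKdef
  have hKcpt : IsCompact K := (isCompact_stdSimplex _ _).inter_right (isClosed_sparse m)
  have hKne : K.Nonempty := by
    obtain ⟨x₀, hx₀⟩ := hS
    refine ⟨fun j => if j = ⟨x₀, hx₀⟩ then 1 else 0, ⟨?_, ?_⟩, ?_⟩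
    · intro j; dsimp only; split <;> norm_num
    · simp
    · have : (Finset.univ.filter fun i : ↥S =>
          (if i = ⟨x₀, hx₀⟩ then (1:ℝ) else 0) ≠ 0) = {⟨x₀, hx₀⟩} := by
        ext j; by_cases h : j = ⟨x₀, hx₀⟩ <;> simp [h]
      simp only [Set.mem_setOf_eq, this, Finset.card_singleton]
      exact hm
  obtain ⟨g₀, hg₀K, hmin⟩ := hKcpt.exists_isMinOn hKne hΦcont.continuousOn
  have hg00 : ∀ i, 0 ≤ g₀ i := hg₀K.1.1
  have hg01 : ∑ i, g₀ i = 1 := hg₀K.1.2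
  set X' := mkDRV S g₀ hg00 hg01 with hX'def
  have hX'supp : X'.f.support ⊆ S := mkDRV_supp S g₀ hg00 hg01
  have hX'cdf : ∀ i : ↥S, X'.cdf ↑i = L g₀ i := by
    intro i
    rw [cdf_coe X' hX'supp]
    exact Finset.sum_congr rfl fun j _ => mkDRV_apply S g₀ hg00 hg01 j
  refine ⟨X', le_trans (mkDRV_suppSize S g₀ hg00 hg01) hg₀K.2, ?_, hX'supp⟩
  intro Y hY
  -- step 1 : dK X X' ≤ Φ g₀
  have step1 : dK X X' ≤ Φ g₀ := by
    refine dK_le X X' fun t => ?_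
    rcases cdf_snap X X' hX'supp t with ⟨h1, h2⟩ | ⟨x, hxS, he1, he2⟩
    · rw [h1, h2]; simp only [sub_self, abs_zero]; exact dist_nonneg
    · rw [he1, he2, show X'.cdf x = L g₀ ⟨x, hxS⟩ from hX'cdf ⟨x, hxS⟩]
      have hd := dist_le_pi_dist F (L g₀) ⟨x, hxS⟩
      rw [Real.dist_eq] at hd
      exact hd
  -- step 2 : build Z and show Φ g₀ ≤ dK X Y
  set r : ℝ → ℝ := snap S hS with hrdef
  set Z := pushDRV Y r with hZdef
  have hZsupp : Z.f.support ⊆ S := by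
    intro x hx
    obtain ⟨y, _, rfl⟩ := Finset.mem_image.1 (pushDRV_supp Y r hx)
    exact snap_mem S hS y
  have hZcard : (Finset.univ.filter fun i : ↥S => Z.f ↑i ≠ 0).card ≤ m := by
    have h1 : (Finset.univ.filter fun i : ↥S => Z.f ↑i ≠ 0).card ≤ Z.f.support.card := by
      refine Finset.card_le_card_of_injOn (fun i => (i : ℝ)) ?_ ?_
      · intro i hi
        exact Finsupp.mem_support_iff.2 (Finset.mem_filter.1 hi).2
      · exact fun a _ b _ h => Subtype.ext h
    have h2 : Z.f.support.card ≤ (Y.f.support.image r).card :=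
      Finset.card_le_card (pushDRV_supp Y r)
    have h3 : (Y.f.support.image r).card ≤ Y.f.support.card := Finset.card_image_le
    exact le_trans h1 (le_trans h2 (le_trans h3 hY))
  set gZ : ↥S → ℝ := fun i => Z.f ↑i with hgZdef
  have hgZK : gZ ∈ K := by
    refine ⟨⟨fun i => Z.nonneg ↑i, ?_⟩, hZcard⟩
    rw [Finset.sum_coe_sort S (fun x => Z.f x)]
    rw [← Finset.sum_subset hZsupp (fun x _ hnx => Finsupp.notMem_support_iff.1 hnx)]
    exact Z.sum_one
  have hLZ : ∀ i : ↥S, L gZ i = Z.cdf ↑i := fun i => (cdf_coe Z hZsupp ↑i).symm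
  have hcoord : ∀ i : ↥S, |X.cdf ↑i - Z.cdf ↑i| ≤ dK X Y := by
    intro i
    by_cases hi : (i : ℝ) = S.max' hS
    · have h1 : X.cdf ↑i = 1 := by
        rw [hi, cdf_eq_sum_subset X (Finset.Subset.refl S),
          Finset.filter_true_of_mem fun x hx => Finset.le_max' S x hx]
        exact X.sum_one
      have h2 : Z.cdf ↑i = 1 := by
        rw [hi, pushDRV_cdf, Finsupp.sum]
        rw [Finset.sum_congr rfl fun y _ => if_pos (snap_le_max S hS y)]
        exact Y.sum_one
      rw [h1, h2]
      simpa using dK_nonneg X Y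
    · have h2 : Z.cdf ↑i = Y.cdf ↑i := by
        rw [pushDRV_cdf, cdf_eq_fsum]
        refine Finsupp.sum_congr fun y _ => ?_
        rw [if_congr (snap_le_iff S hS y i.2 hi) rfl rfl]
      rw [h2]
      exact le_dK X Y ↑i
  have step2 : Φ gZ ≤ dK X Y := by
    rw [hΦdef]
    rw [dist_pi_le_iff (dK_nonneg X Y)]
    intro i
    rw [Real.dist_eq, hLZ i]
    exact hcoord i
  exact le_trans step1 (le_trans (isMinOn_iff.1 hmin gZ hgZK) step2)
end

section
/- Saddleback search correctness: let A be an n × m matrix with real entries that is monotone nondecreasing in both indices, and let P : ℝ → Prop be a monotone predicate (if P(a) and a ≤ b then P(b)). Then the staircase walk starting at the top-right corner (row 1, column m), moving left when P holds at the current entry and down otherwise, visits some entry achieving the minimum value of {A(i,j) : P(A(i,j))} whenever that set is nonempty, using at most n + m steps. -/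
open scoped Classical

/-- The staircase (saddleback) walk on an `n × m` matrix `A` (rows and columns
`0`-indexed), starting from position `p` with the given amount of `fuel`:
at entry `(i,j)`, if `P (A i j)` holds the entry is recorded and the walk
moves left, otherwise it moves down; it stops upon leaving the matrix.  The
returned list is the list of recorded entries. -/
noncomputable def saddleWalk (A : ℕ → ℕ → ℝ) (P : ℝ → Prop) (n : ℕ) :
    ℕ → ℕ × ℕ → List (ℕ × ℕ)
  | 0, _ => []
  | fuel + 1, (i, j) =>
    if i < n then
      if P (A i j) then
        (i, j) :: (if j = 0 then [] else saddleWalk A P n fuel (i, j - 1))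
      else saddleWalk A P n fuel (i + 1, j)
    else []

theorem saddle_aux (n m : ℕ) (A : ℕ → ℕ → ℝ)
    (hsorted : ∀ i i' j j', i ≤ i' → i' < n → j ≤ j' → j' < m → A i j ≤ A i' j')
    (P : ℝ → Prop) (hP : ∀ a b : ℝ, P a → a ≤ b → P b) :
    ∀ fuel i j, j < m → n - i + j + 1 ≤ fuel →
    (∃ i', i ≤ i' ∧ i' < n ∧ ∃ j' ≤ j, P (A i' j')) →
    ∃ p ∈ saddleWalk A P n fuel (i, j),
      i ≤ p.1 ∧ p.1 < n ∧ p.2 ≤ j ∧ P (A p.1 p.2) ∧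
      ∀ i'', i ≤ i'' → i'' < n → ∀ j'' ≤ j, P (A i'' j'') → A p.1 p.2 ≤ A i'' j'' := by
  intro fuel
  induction fuel with
  | zero =>
    intro i j hj hf h
    omega
  | succ fuel ih =>
    rintro i j hj hf ⟨i', hii', hi'n, j', hj'j, hPij'⟩
    have hin : i < n := lt_of_le_of_lt hii' hi'n
    rw [saddleWalk, if_pos hin]
    by_cases hPij : P (A i j)
    · rw [if_pos hPij]
      by_cases hj0 : j = 0
      · subst hj0
        refine ⟨(i, 0), by simp, le_refl _, hin, le_refl _, hPij, ?_⟩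
        intro i'' hii'' hi''n j'' hj'' _
        have : j'' = 0 := Nat.le_zero.mp hj''
        subst this
        exact hsorted i i'' 0 0 hii'' hi''n (le_refl _) hj
      · rw [if_neg hj0]
        by_cases hsub : ∃ i₂, i ≤ i₂ ∧ i₂ < n ∧ ∃ j₂ ≤ j - 1, P (A i₂ j₂)
        · obtain ⟨p, hpmem, hple, hpn, hpj, hpP, hpmin⟩ :=
            ih i (j - 1) (by omega) (by omega) hsub
          by_cases hcmp : A p.1 p.2 ≤ A i j
          · refine ⟨p, List.mem_cons_of_mem _ hpmem, hple, hpn, by omega, hpP, ?_⟩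
            intro i'' hii'' hi''n j'' hj'' hPij''
            rcases Nat.lt_or_ge j'' j with h1 | h1
            · exact hpmin i'' hii'' hi''n j'' (by omega) hPij''
            · have : j'' = j := le_antisymm hj'' h1
              subst this
              exact le_trans hcmp (hsorted i i'' j'' j'' hii'' hi''n (le_refl _) hj)
          · push_neg at hcmp
            refine ⟨(i, j), List.mem_cons_self, le_refl _, hin, le_refl _, hPij, ?_⟩
            intro i'' hii'' hi''n j'' hj'' hPij''
            rcases Nat.lt_or_ge j'' j with h1 | h1
            · exact le_trans hcmp.le (hpmin i'' hii'' hi''n j'' (by omega) hPij'')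
            · have : j'' = j := le_antisymm hj'' h1
              subst this
              exact hsorted i i'' j'' j'' hii'' hi''n (le_refl _) hj
        · refine ⟨(i, j), List.mem_cons_self, le_refl _, hin, le_refl _, hPij, ?_⟩
          intro i'' hii'' hi''n j'' hj'' hPij''
          rcases Nat.lt_or_ge j'' j with h1 | h1
          · exact absurd ⟨i'', hii'', hi''n, j'', by omega, hPij''⟩ hsub
          · have : j'' = j := le_antisymm hj'' h1
            subst this
            exact hsorted i i'' j'' j'' hii'' hi''n (le_refl _) hj
    · rw [if_neg hPij]
      have hnotrow : ∀ j'' ≤ j, ¬ P (A i j'') := by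
        intro j'' hj'' hc
        exact hPij (hP _ _ hc (hsorted i i j'' j (le_refl _) hin hj'' hj))
      have hi'1 : i + 1 ≤ i' := by
        rcases Nat.lt_or_ge i i' with h | h
        · omega
        · have : i' = i := le_antisymm h hii'
          subst this
          exact absurd hPij' (hnotrow j' hj'j)
      obtain ⟨p, hpmem, hple, hpn, hpj, hpP, hpmin⟩ :=
        ih (i + 1) j hj (by omega) ⟨i', hi'1, hi'n, j', hj'j, hPij'⟩
      refine ⟨p, hpmem, by omega, hpn, hpj, hpP, ?_⟩
      intro i'' hii'' hi''n j'' hj'' hPij''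
      rcases Nat.lt_or_ge i i'' with h | h
      · exact hpmin i'' h hi''n j'' hj'' hPij''
      · have : i'' = i := le_antisymm h hii''
        subst this
        exact absurd hPij'' (hnotrow j'' hj'')

/-- Saddleback search correctness: if `A` is an `n × m` matrix monotone
nondecreasing in both indices, `P` is a monotone predicate, and some entry of
the matrix satisfies `P`, then the staircase walk starting at the top-right
corner with `n + m` steps of fuel records an entry achieving the minimum of
`{A i j : i < n, j < m, P (A i j)}`. -/
theorem saddleback_correct
    (n m : ℕ) (hn : 1 ≤ n) (hm : 1 ≤ m)
    (A : ℕ → ℕ → ℝ)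
    (hsorted : ∀ i i' j j', i ≤ i' → i' < n → j ≤ j' → j' < m →
      A i j ≤ A i' j')
    (P : ℝ → Prop) (hP : ∀ a b : ℝ, P a → a ≤ b → P b)
    (hne : ∃ i < n, ∃ j < m, P (A i j)) :
    ∃ p ∈ saddleWalk A P n (n + m) (0, m - 1),
      p.1 < n ∧ p.2 < m ∧ P (A p.1 p.2) ∧
      ∀ i < n, ∀ j < m, P (A i j) → A p.1 p.2 ≤ A i j := by
  obtain ⟨i, hin, j, hjm, hPij⟩ := hne
  obtain ⟨p, hpmem, _, hpn, hpj, hpP, hpmin⟩ :=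
    saddle_aux n m A hsorted P hP (n + m) 0 (m - 1) (by omega) (by omega)
      ⟨i, Nat.zero_le _, hin, j, by omega, hPij⟩
  exact ⟨p, hpmem, hpn, by omega, hpP,
    fun i' hi' j' hj' h => hpmin i' (Nat.zero_le _) hi' j' (by omega) h⟩
end
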